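/- Let A = [[A_ff, A_fc],[A_cf, A_cc]] be SPD. Among all interpolation operators of the form P = [W; I], the operator P_ideal = [−A_ff⁻¹A_fc; I] minimizes the measure μ(P) = max over nonzero u of ‖u − P u_c‖² / ⟨A u, u⟩, where u_c is the restriction of u to C-points. -/

import Mathlib

open Matrix

/-- Cauchy–Schwarz / Frobenius bound for `mulVec`. -/
lemma aux_mulVec_sq_le {m n : Type*} [Fintype m] [Fintype n]
    (M : Matrix m n ℝ) (x : n → ℝ) :
    M.mulVec x ⬝ᵥ M.mulVec x ≤ (∑ i, ∑ j, M i j ^ 2) * (x ⬝ᵥ x) := by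
  have key : ∀ i, (M.mulVec x i) ^ 2 ≤ (∑ j, M i j ^ 2) * (x ⬝ᵥ x) := by
    intro i
    have h := Finset.sum_mul_sq_le_sq_mul_sq Finset.univ (fun j => M i j) x
    have e1 : M.mulVec x i = ∑ j, M i j * x j := rfl
    rw [e1]
    refine h.trans_eq ?_
    congr 1
    simp [dotProduct, sq]
  calc M.mulVec x ⬝ᵥ M.mulVec x = ∑ i, (M.mulVec x i) ^ 2 := by simp [dotProduct, sq]
    _ ≤ ∑ i, (∑ j, M i j ^ 2) * (x ⬝ᵥ x) := Finset.sum_le_sum fun i _ => key i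
    _ = (∑ i, ∑ j, M i j ^ 2) * (x ⬝ᵥ x) := (Finset.sum_mul _ _ _).symm

/-- symmetric-matrix bilinear form symmetry -/
lemma aux_sym_dot {n : Type*} [Fintype n] (M : Matrix n n ℝ) (hM : Mᵀ = M)
    (x y : n → ℝ) : M.mulVec x ⬝ᵥ y = M.mulVec y ⬝ᵥ x := by
  rw [dotProduct_comm, Matrix.dotProduct_mulVec, ← Matrix.mulVec_transpose, hM]

open scoped MatrixOrder in
/-- lower bound for a positive definite quadratic form. -/
lemma aux_posdef_lower {n : Type*} [Fintype n] [DecidableEq n]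
    (A : Matrix n n ℝ) (hA : A.PosDef) :
    ∃ C : ℝ, 0 ≤ C ∧ ∀ x : n → ℝ, x ⬝ᵥ x ≤ C * (A.mulVec x ⬝ᵥ x) := by
  set B := CFC.sqrt A with hBdef
  have hBB : B * B = A := CFC.sqrt_mul_sqrt_self A hA.posSemidef.nonneg
  have hBsym : Bᵀ = B := by
    have h := (Matrix.nonneg_iff_posSemidef.mp (CFC.sqrt_nonneg A)).1
    simpa [Matrix.IsHermitian] using h
  have hdetB : IsUnit B.det := by
    have hdetA : 0 < A.det := hA.det_pos
    have : B.det * B.det = A.det := by rw [← Matrix.det_mul, hBB]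
    refine isUnit_iff_ne_zero.mpr fun h0 => hdetA.ne' ?_
    rw [← this, h0, mul_zero]
  refine ⟨∑ i, ∑ j, B⁻¹ i j ^ 2, ?_, fun x => ?_⟩
  · exact Finset.sum_nonneg fun i _ => Finset.sum_nonneg fun j _ => sq_nonneg _
  · have hx : x = B⁻¹.mulVec (B.mulVec x) := by
      rw [Matrix.mulVec_mulVec, Matrix.nonsing_inv_mul _ hdetB, Matrix.one_mulVec]
    have key : A.mulVec x ⬝ᵥ x = B.mulVec x ⬝ᵥ B.mulVec x := by
      have h1 : A.mulVec x = B.mulVec (B.mulVec x) := by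
        rw [Matrix.mulVec_mulVec, hBB]
      rw [h1, aux_sym_dot B hBsym (B.mulVec x) x, dotProduct_comm]
    rw [key]
    calc x ⬝ᵥ x = B⁻¹.mulVec (B.mulVec x) ⬝ᵥ B⁻¹.mulVec (B.mulVec x) := by rw [← hx]
      _ ≤ (∑ i, ∑ j, B⁻¹ i j ^ 2) * (B.mulVec x ⬝ᵥ B.mulVec x) :=
        aux_mulVec_sq_le B⁻¹ (B.mulVec x)

/-- the error vector as a matrix applied to `u`. -/
lemma aux_err_eq {nf nc : ℕ} (P : Matrix (Fin nf ⊕ Fin nc) (Fin nc) ℝ)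
    (u : Fin nf ⊕ Fin nc → ℝ) :
    u - P.mulVec (fun j => u (Sum.inr j)) =
      ((1 : Matrix (Fin nf ⊕ Fin nc) (Fin nf ⊕ Fin nc) ℝ) -
        P * Matrix.of (fun i (j : Fin nf ⊕ Fin nc) => if j = Sum.inr i then (1 : ℝ) else 0)).mulVec u := by
  have hR : (Matrix.of (fun i (j : Fin nf ⊕ Fin nc) => if j = Sum.inr i then (1 : ℝ) else 0)).mulVec u
      = fun j => u (Sum.inr j) := by
    funext i
    simp [Matrix.mulVec, dotProduct, ite_mul, Finset.sum_ite_eq']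
  rw [Matrix.sub_mulVec, Matrix.one_mulVec, ← Matrix.mulVec_mulVec, hR]

/-- the ratio family is bounded above. -/
lemma aux_bdd {nf nc : ℕ}
    (Aff : Matrix (Fin nf) (Fin nf) ℝ) (Afc : Matrix (Fin nf) (Fin nc) ℝ)
    (Acf : Matrix (Fin nc) (Fin nf) ℝ) (Acc : Matrix (Fin nc) (Fin nc) ℝ)
    (hA : (Matrix.fromBlocks Aff Afc Acf Acc).PosDef)
    (P : Matrix (Fin nf ⊕ Fin nc) (Fin nc) ℝ) :
    BddAbove (Set.range fun u : {u : Fin nf ⊕ Fin nc → ℝ // u ≠ 0} =>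
      ((u.1 - P.mulVec (fun j => u.1 (Sum.inr j))) ⬝ᵥ (u.1 - P.mulVec (fun j => u.1 (Sum.inr j)))) /
        (((Matrix.fromBlocks Aff Afc Acf Acc).mulVec u.1) ⬝ᵥ u.1)) := by
  set A := Matrix.fromBlocks Aff Afc Acf Acc with hAdef
  obtain ⟨C, hC0, hC⟩ := aux_posdef_lower A hA
  set M := ((1 : Matrix (Fin nf ⊕ Fin nc) (Fin nf ⊕ Fin nc) ℝ) -
      P * Matrix.of (fun i (j : Fin nf ⊕ Fin nc) => if j = Sum.inr i then (1 : ℝ) else 0)) with hMdef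
  set K : ℝ := ∑ i, ∑ j, M i j ^ 2 with hKdef
  have hK0 : 0 ≤ K := Finset.sum_nonneg fun i _ => Finset.sum_nonneg fun j _ => sq_nonneg _
  refine ⟨K * C, ?_⟩
  rintro x ⟨u, rfl⟩
  have hD : 0 < A.mulVec u.1 ⬝ᵥ u.1 := by
    have := hA.dotProduct_mulVec_pos u.2
    simpa [dotProduct_comm] using this
  rw [div_le_iff₀ hD]
  have h1 : (u.1 - P.mulVec (fun j => u.1 (Sum.inr j))) ⬝ᵥ (u.1 - P.mulVec (fun j => u.1 (Sum.inr j)))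
      ≤ K * (u.1 ⬝ᵥ u.1) := by
    rw [aux_err_eq P u.1]
    exact aux_mulVec_sq_le M u.1
  calc (u.1 - P.mulVec (fun j => u.1 (Sum.inr j))) ⬝ᵥ (u.1 - P.mulVec (fun j => u.1 (Sum.inr j)))
      ≤ K * (u.1 ⬝ᵥ u.1) := h1
    _ ≤ K * (C * (A.mulVec u.1 ⬝ᵥ u.1)) := mul_le_mul_of_nonneg_left (hC u.1) hK0
    _ = K * C * (A.mulVec u.1 ⬝ᵥ u.1) := by ring

/-- ideal interpolation minimizes μ(P) over CF-form interpolations. -/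
theorem ideal_interp_minimizes_mu (nf nc : ℕ)
    (Aff : Matrix (Fin nf) (Fin nf) ℝ) (Afc : Matrix (Fin nf) (Fin nc) ℝ)
    (Acf : Matrix (Fin nc) (Fin nf) ℝ) (Acc : Matrix (Fin nc) (Fin nc) ℝ)
    (hA : (Matrix.fromBlocks Aff Afc Acf Acc).PosDef)
    (hAff : IsUnit Aff.det)
    -- μ(P) as a supremum over nonzero fine-grid vectors
    (mu : Matrix (Fin nf ⊕ Fin nc) (Fin nc) ℝ → ℝ)
    (hmu : ∀ P, mu P = ⨆ u : {u : Fin nf ⊕ Fin nc → ℝ // u ≠ 0},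
        ((u.1 - P.mulVec (fun j => u.1 (Sum.inr j))) ⬝ᵥ (u.1 - P.mulVec (fun j => u.1 (Sum.inr j)))) /
          (((Matrix.fromBlocks Aff Afc Acf Acc).mulVec u.1) ⬝ᵥ u.1)) :
    ∀ W : Matrix (Fin nf) (Fin nc) ℝ,
      mu (Matrix.fromRows (-(Aff⁻¹ * Afc)) (1 : Matrix (Fin nc) (Fin nc) ℝ)) ≤
        mu (Matrix.fromRows W (1 : Matrix (Fin nc) (Fin nc) ℝ)) := by
  intro W
  set A := Matrix.fromBlocks Aff Afc Acf Acc with hAdef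
  set Pid := Matrix.fromRows (-(Aff⁻¹ * Afc)) (1 : Matrix (Fin nc) (Fin nc) ℝ) with hPid
  set PW := Matrix.fromRows W (1 : Matrix (Fin nc) (Fin nc) ℝ) with hPW
  rw [hmu, hmu]
  by_cases hne : Nonempty {u : Fin nf ⊕ Fin nc → ℝ // u ≠ 0}
  · have hbdd := aux_bdd Aff Afc Acf Acc hA PW
    have hsymA : Aᵀ = A := by
      have h := hA.1
      simpa [Matrix.IsHermitian] using h
    apply ciSup_le
    intro u
    set uc : Fin nc → ℝ := fun j => u.1 (Sum.inr j) with huc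
    set v : Fin nf → ℝ := fun i => u.1 (Sum.inl i) + (Aff⁻¹ * Afc).mulVec uc i with hv
    set wf : Fin nf → ℝ := -((Aff⁻¹ * Afc).mulVec uc) with hwf
    set u' : Fin nf ⊕ Fin nc → ℝ := Sum.elim v 0 with hu'
    set w : Fin nf ⊕ Fin nc → ℝ := Sum.elim wf uc with hw
    -- error vector for ideal interpolation
    have herr : u.1 - Pid.mulVec (fun j => u.1 (Sum.inr j)) = u' := by
      funext i
      cases i with
      | inl i => simp [hPid, hu', hv, Matrix.fromRows_mulVec, Matrix.neg_mulVec, huc, sub_neg_eq_add]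
      | inr j => simp [hPid, hu', Matrix.fromRows_mulVec, huc]
    have hsplit : u.1 = u' + w := by
      funext i
      cases i with
      | inl i => simp [hu', hw, hv, hwf]
      | inr j => simp [hu', hw, huc]
    -- A w has zero fine part
    have hAffwf : Aff.mulVec wf = -(Afc.mulVec uc) := by
      have : Aff * (Aff⁻¹ * Afc) = Afc := by
        rw [← Matrix.mul_assoc, Matrix.mul_nonsing_inv _ hAff, Matrix.one_mul]
      rw [hwf, Matrix.mulVec_neg, Matrix.mulVec_mulVec, this]
    have hAw : A.mulVec w = Sum.elim (0 : Fin nf → ℝ) (Acf.mulVec wf + Acc.mulVec uc) := by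
      rw [hAdef, hw, Matrix.fromBlocks_mulVec]
      have h1 : (Sum.elim wf uc ∘ Sum.inl) = wf := rfl
      have h2 : (Sum.elim wf uc ∘ Sum.inr) = uc := rfl
      rw [h1, h2, hAffwf, neg_add_cancel]
    have hcross : A.mulVec w ⬝ᵥ u' = 0 := by
      rw [hAw, hu']
      simp [dotProduct, Fintype.sum_sum_type]
    -- decompose the quadratic form
    have hDsplit : A.mulVec u.1 ⬝ᵥ u.1 = A.mulVec u' ⬝ᵥ u' + A.mulVec w ⬝ᵥ w := by
      rw [hsplit, Matrix.mulVec_add]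
      rw [add_dotProduct, dotProduct_add, dotProduct_add]
      have h1 : A.mulVec u' ⬝ᵥ w = A.mulVec w ⬝ᵥ u' := aux_sym_dot A hsymA u' w
      rw [h1, hcross]
      ring
    have hAww : 0 ≤ A.mulVec w ⬝ᵥ w := by
      have := hA.posSemidef.dotProduct_mulVec_nonneg w
      simpa [dotProduct_comm] using this
    -- numerators agree
    have hNum : (u.1 - Pid.mulVec (fun j => u.1 (Sum.inr j))) ⬝ᵥ (u.1 - Pid.mulVec (fun j => u.1 (Sum.inr j)))
        = v ⬝ᵥ v := by
      rw [herr, hu']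
      simp [dotProduct, Fintype.sum_sum_type]
    rw [hNum]
    have hvv : 0 ≤ v ⬝ᵥ v := Finset.sum_nonneg fun i _ => mul_self_nonneg _
    by_cases hv0 : v = 0
    · -- ratio is 0; RHS sup is nonneg
      rw [hv0]
      simp only [zero_dotProduct, zero_div]
      have hterm : 0 ≤ ((u.1 - PW.mulVec (fun j => u.1 (Sum.inr j))) ⬝ᵥ (u.1 - PW.mulVec (fun j => u.1 (Sum.inr j)))) /
          ((A.mulVec u.1) ⬝ᵥ u.1) := by
        apply div_nonneg
        · exact Finset.sum_nonneg fun i _ => mul_self_nonneg _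
        · have := hA.dotProduct_mulVec_pos u.2
          have h' : 0 < A.mulVec u.1 ⬝ᵥ u.1 := by simpa [dotProduct_comm] using this
          exact h'.le
      exact le_trans hterm (le_ciSup hbdd u)
    · have hu'0 : u' ≠ 0 := by
        intro h0
        apply hv0
        funext i
        have := congrFun h0 (Sum.inl i)
        simpa [hu'] using this
      have hD' : 0 < A.mulVec u' ⬝ᵥ u' := by
        have := hA.dotProduct_mulVec_pos hu'0
        simpa [dotProduct_comm] using this
      have hD : 0 < A.mulVec u.1 ⬝ᵥ u.1 := by
        have := hA.dotProduct_mulVec_pos u.2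
        simpa [dotProduct_comm] using this
      -- the W-ratio at u' equals v⬝v / (A u' ⬝ u')
      have hterm' : ((u' - PW.mulVec (fun j => u' (Sum.inr j))) ⬝ᵥ (u' - PW.mulVec (fun j => u' (Sum.inr j)))) /
          ((A.mulVec u') ⬝ᵥ u') = v ⬝ᵥ v / (A.mulVec u' ⬝ᵥ u') := by
        have hzero : (fun j => u' (Sum.inr j)) = (0 : Fin nc → ℝ) := by
          funext j; simp [hu']
        rw [hzero, Matrix.mulVec_zero, sub_zero]
        congr 1
        rw [hu']
        simp [dotProduct, Fintype.sum_sum_type]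
      have hle1 : v ⬝ᵥ v / (A.mulVec u.1 ⬝ᵥ u.1) ≤ v ⬝ᵥ v / (A.mulVec u' ⬝ᵥ u') := by
        apply div_le_div_of_nonneg_left hvv hD'
        rw [hDsplit]
        linarith
      calc v ⬝ᵥ v / (A.mulVec u.1 ⬝ᵥ u.1)
          ≤ v ⬝ᵥ v / (A.mulVec u' ⬝ᵥ u') := hle1
        _ = ((u' - PW.mulVec (fun j => u' (Sum.inr j))) ⬝ᵥ (u' - PW.mulVec (fun j => u' (Sum.inr j)))) /
            ((A.mulVec u') ⬝ᵥ u') := hterm'.symm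
        _ ≤ _ := le_ciSup hbdd ⟨u', hu'0⟩
  · haveI : IsEmpty {u : Fin nf ⊕ Fin nc → ℝ // u ≠ 0} := not_nonempty_iff.mp hne
    rw [iSup_of_empty', iSup_of_empty']
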